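/- Let θ ∈ ℝ be a constant with cos θ ≠ 0, and let h, m : ℝ → ℝ be differentiable with h'(s) = −tan θ·h(s)² and m'(s) = tan θ·h(s)·m(s) for all s. Then m is twice differentiable and m''(s) = 0 for every s ∈ ℝ; consequently m(s) = m(0) + m'(0)·s. -/

import Mathlib

/-- Let `θ ∈ ℝ` be a constant with `cos θ ≠ 0`, and let `h, m : ℝ → ℝ`
be differentiable with `h' s = -tan θ * (h s)²` and `m' s = tan θ * h s * m s` for all
`s`. Then `m` is twice differentiable and `m'' s = 0` for every `s ∈ ℝ`; consequently
`m s = m 0 + m' 0 * s`. -/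
theorem stmt_11 (θ : ℝ) (h m : ℝ → ℝ) (hcos : Real.cos θ ≠ 0)
    (hh : Differentiable ℝ h) (hm : Differentiable ℝ m)
    (hh' : ∀ s, deriv h s = -Real.tan θ * (h s) ^ 2)
    (hm' : ∀ s, deriv m s = Real.tan θ * h s * m s) :
    Differentiable ℝ (deriv m) ∧ (∀ s, deriv (deriv m) s = 0) ∧
      ∀ s, m s = m 0 + deriv m 0 * s := by
  have hdm : deriv m = fun s => Real.tan θ * h s * m s := funext hm'
  have hdiff : Differentiable ℝ (deriv m) := by
    rw [hdm]
    exact ((differentiable_const _).mul hh).mul hm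
  have hzero : ∀ s, deriv (deriv m) s = 0 := by
    intro s
    rw [hdm]
    have := (((differentiable_const (Real.tan θ)).mul hh).mul hm) s
    rw [deriv_fun_mul (show DifferentiableAt ℝ (fun y => Real.tan θ * h y) s from ((differentiable_const (Real.tan θ)).mul hh) s) (hm s),
        deriv_fun_mul (show DifferentiableAt ℝ (fun _ => Real.tan θ) s from differentiable_const (Real.tan θ) s) (hh s),
        deriv_const, hh' s, hm' s]
    ring
  refine ⟨hdiff, hzero, ?_⟩
  have hc : ∀ s, deriv m s = deriv m 0 :=
    fun s => is_const_of_deriv_eq_zero hdiff hzero s 0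
  intro s
  have hg : Differentiable ℝ (fun s => m s - deriv m 0 * s) :=
    hm.sub ((differentiable_const _).mul differentiable_id)
  have hg' : ∀ x, deriv (fun s => m s - deriv m 0 * s) x = 0 := by
    intro x
    have h1 : HasDerivAt (fun s => m s - deriv m 0 * s) (deriv m x - deriv m 0) x :=
      (hm x).hasDerivAt.sub (((hasDerivAt_id x).const_mul (deriv m 0)).congr_deriv (by ring))
    rw [h1.deriv, hc x, sub_self]
  have := is_const_of_deriv_eq_zero hg hg' s 0
  simp only [mul_zero, sub_zero] at this
  linarith [this]
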